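/- Let w ∈ ℝ^m be generic for the toric ideal I_V (i.e. in_w(I_V) is a monomial ideal). If in_w(I_V) is an initial ideal of I_V, that is, in_w(I_V) = in_≼(I_V) for some monomial (term) order ≼ on K[x_1,…,x_m], then w ∈ W. -/

import Mathlib

open Matrix MvPolynomial

/-- The toric ideal of `V`: kernel of `xⱼ ↦ t^{vⱼ}` into Laurent polynomials. -/
noncomputable def toricIdeal (K : Type*) [Field K] {n m : ℕ}
    (V : Matrix (Fin n) (Fin m) ℤ) : Ideal (MvPolynomial (Fin m) K) :=
  RingHom.ker (MvPolynomial.aeval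
    (fun j => AddMonoidAlgebra.of' K (Fin n → ℤ) (fun i => V i j)) :
    MvPolynomial (Fin m) K →ₐ[K] AddMonoidAlgebra K (Fin n → ℤ))

/-- The `w`-weight of an exponent vector `a`: `wᵀ a`. -/
noncomputable def wdeg {m : ℕ} (w : Fin m → ℝ) (a : Fin m →₀ ℕ) : ℝ :=
  ∑ i, w i * (a i : ℝ)

/-- The initial form `in_w(f)`: the sum of the terms of `f` of maximal `w`-weight. -/
noncomputable def initialForm {K : Type*} [Field K] {m : ℕ} (w : Fin m → ℝ)
    (f : MvPolynomial (Fin m) K) : MvPolynomial (Fin m) K :=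
  ∑ a ∈ f.support.filter (fun a => ∀ b ∈ f.support, wdeg w b ≤ wdeg w a),
    MvPolynomial.monomial a (f.coeff a)

/-- The initial ideal `in_w(I)`: the ideal generated by the initial forms of elements of `I`. -/
noncomputable def initialIdealW {K : Type*} [Field K] {m : ℕ} (w : Fin m → ℝ)
    (I : Ideal (MvPolynomial (Fin m) K)) : Ideal (MvPolynomial (Fin m) K) :=
  Ideal.span {g | ∃ f ∈ I, g = initialForm w f}

/-- A monomial ideal: an ideal generated by monomials. -/
def IsMonomialIdeal {K : Type*} [Field K] {m : ℕ}
    (J : Ideal (MvPolynomial (Fin m) K)) : Prop :=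
  ∃ S : Set (Fin m →₀ ℕ),
    J = Ideal.span ((fun a => MvPolynomial.monomial a (1 : K)) '' S)

/-- A monomial (term) order on the exponent vectors in `ℕᵐ`: a total order,
compatible with addition, for which `0` is the smallest element. -/
structure TermOrder (m : ℕ) where
  le : (Fin m →₀ ℕ) → (Fin m →₀ ℕ) → Prop
  refl : ∀ a, le a a
  trans : ∀ a b c, le a b → le b c → le a c
  antisymm : ∀ a b, le a b → le b a → a = b
  total : ∀ a b, le a b ∨ le b a
  zero_le : ∀ a, le 0 a
  add_right : ∀ a b c, le a b → le (a + c) (b + c)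

/-- The initial ideal `in_≼(I)`: the ideal generated by the `≼`-leading monomials of
the nonzero elements of `I`. -/
noncomputable def initialIdealOrd {K : Type*} [Field K] {m : ℕ} (t : TermOrder m)
    (I : Ideal (MvPolynomial (Fin m) K)) : Ideal (MvPolynomial (Fin m) K) :=
  Ideal.span {g | ∃ f ∈ I, f ≠ 0 ∧ ∃ a ∈ f.support,
    (∀ b ∈ f.support, t.le b a) ∧ g = MvPolynomial.monomial a (1 : K)}

/-- The cone `U = ker_ℝ(V) ∩ ℝᵐ_{≥0}`. -/
def coneU {n m : ℕ} (V : Matrix (Fin n) (Fin m) ℤ) : Set (Fin m → ℝ) :=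
  {u | (V.map (Int.cast : ℤ → ℝ)) *ᵥ u = 0 ∧ ∀ i, 0 ≤ u i}

/-- The Gröbner region `W`: weight vectors whose linear functional is bounded below on `U`. -/
def coneW {n m : ℕ} (V : Matrix (Fin n) (Fin m) ℤ) : Set (Fin m → ℝ) :=
  {w | ∃ c : ℝ, ∀ u ∈ coneU V, c ≤ w ⬝ᵥ u}

/-- A rational matrix has a rational "projector onto its kernel":
`A * P = 0` and `P = 1 + Q * A`. -/
lemma exists_kernel_projector {n m : ℕ} (A : Matrix (Fin n) (Fin m) ℚ) :
    ∃ (P : Matrix (Fin m) (Fin m) ℚ) (Q : Matrix (Fin m) (Fin n) ℚ),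
      A * P = 0 ∧ P = 1 + Q * A := by
  set f : (Fin m → ℚ) →ₗ[ℚ] (Fin n → ℚ) := Matrix.toLin' A with hf
  obtain ⟨c, hc⟩ := Submodule.exists_isCompl (LinearMap.ker f)
  set π : (Fin m → ℚ) →ₗ[ℚ] (Fin m → ℚ) :=
    (LinearMap.ker f).subtype ∘ₗ Submodule.projectionOnto _ c hc with hπ
  have hπker : ∀ x, f (π x) = 0 := fun x => (Submodule.projectionOnto _ c hc x).2
  have hπid : ∀ x ∈ LinearMap.ker f, π x = x := by
    intro x hx
    simp [hπ, Submodule.projectionOnto_apply_left hc ⟨x, hx⟩]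
  obtain ⟨d, hd⟩ := Submodule.exists_isCompl (LinearMap.range f)
  obtain ⟨r, hr⟩ := LinearMap.exists_rightInverse_of_surjective f.rangeRestrict
    (LinearMap.range_eq_top.2 f.surjective_rangeRestrict)
  set ρ : (Fin n → ℚ) →ₗ[ℚ] LinearMap.range f :=
    Submodule.projectionOnto _ d hd with hρ
  set h : (Fin n → ℚ) →ₗ[ℚ] (Fin m → ℚ) := (π - LinearMap.id) ∘ₗ r ∘ₗ ρ with hh
  have key : h ∘ₗ f = π - LinearMap.id := by
    apply LinearMap.ext
    intro x
    have h1 : ρ (f x) = ⟨f x, ⟨x, rfl⟩⟩ :=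
      Submodule.projectionOnto_apply_left hd ⟨f x, ⟨x, rfl⟩⟩
    have h2 : f (r ⟨f x, ⟨x, rfl⟩⟩) = f x := by
      have := congrArg (fun g => g ⟨f x, ⟨x, rfl⟩⟩) hr
      simpa using congrArg Subtype.val this
    have h3 : r ⟨f x, ⟨x, rfl⟩⟩ - x ∈ LinearMap.ker f := by
      simp [LinearMap.mem_ker, map_sub, h2]
    have h4 : π (r ⟨f x, ⟨x, rfl⟩⟩ - x) = r ⟨f x, ⟨x, rfl⟩⟩ - x := hπid _ h3
    have h5 : π (r ⟨f x, ⟨x, rfl⟩⟩) = π x + (r ⟨f x, ⟨x, rfl⟩⟩ - x) := by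
      have := map_sub π (r ⟨f x, ⟨x, rfl⟩⟩) x
      rw [h4] at this
      linear_combination (norm := module) -this
    simp only [hh, LinearMap.comp_apply, LinearMap.sub_apply, LinearMap.id_apply, h1, h5]
    abel
  refine ⟨LinearMap.toMatrix' π, LinearMap.toMatrix' h, ?_, ?_⟩
  · have : f ∘ₗ π = 0 := LinearMap.ext fun x => hπker x
    calc A * LinearMap.toMatrix' π
        = LinearMap.toMatrix' f * LinearMap.toMatrix' π := by rw [hf, LinearMap.toMatrix'_toLin']
      _ = LinearMap.toMatrix' (f ∘ₗ π) := (LinearMap.toMatrix'_comp f π).symm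
      _ = 0 := by rw [this]; exact map_zero _
  · have : LinearMap.toMatrix' (π - LinearMap.id) = LinearMap.toMatrix' h * A := by
      rw [← key, LinearMap.toMatrix'_comp, hf, LinearMap.toMatrix'_toLin']
    rw [map_sub, LinearMap.toMatrix'_id] at this
    linear_combination (norm := noncomm_ring) this

set_option maxHeartbeats 1000000 in
lemma exists_rat_kernel_point {n m : ℕ} (V : Matrix (Fin n) (Fin m) ℤ) (w : Fin m → ℝ)
    (u : Fin m → ℝ) (hker : (V.map (Int.cast : ℤ → ℝ)) *ᵥ u = 0) (ε : ℝ) (hε : 0 < ε)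
    (hpos : ∀ i, ε ≤ u i) (hneg : w ⬝ᵥ u < 0) :
    ∃ q : Fin m → ℚ, (V.map (Int.cast : ℤ → ℚ)) *ᵥ q = 0 ∧ (∀ i, 0 ≤ q i) ∧
      ∑ i, w i * (q i : ℝ) < 0 := by
  set A : Matrix (Fin n) (Fin m) ℚ := V.map (Int.cast : ℤ → ℚ) with hA
  obtain ⟨P, Q, hAP, hPQ⟩ := exists_kernel_projector A
  have hcast : A.map (Rat.cast : ℚ → ℝ) = V.map (Int.cast : ℤ → ℝ) := by
    rw [hA, Matrix.map_map]
    ext i j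
    simp
  set Pr : Matrix (Fin m) (Fin m) ℝ := P.map (Rat.cast : ℚ → ℝ) with hPr
  have hPu : Pr *ᵥ u = u := by
    have h1 : Pr = 1 + Q.map (Rat.cast : ℚ → ℝ) * V.map (Int.cast : ℤ → ℝ) := by
      rw [hPr, hPQ, ← hcast]
      have h2 : ((1 + Q * A).map (Rat.castHom ℝ) : Matrix (Fin m) (Fin m) ℝ)
          = 1 + Q.map (Rat.castHom ℝ) * A.map (Rat.castHom ℝ) := by
        rw [Matrix.map_add _ (by simp), Matrix.map_mul, Matrix.map_one _ (by simp) (by simp)]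
      simpa using h2
    rw [h1, Matrix.add_mulVec, Matrix.one_mulVec, ← Matrix.mulVec_mulVec, hker,
      Matrix.mulVec_zero, add_zero]
  set C : ℝ := ∑ i, ∑ j, |(P i j : ℝ)| with hC
  have hC0 : 0 ≤ C := Finset.sum_nonneg fun i _ => Finset.sum_nonneg fun j _ => abs_nonneg _
  set Wsum : ℝ := ∑ i, |w i| with hW
  have hW0 : 0 ≤ Wsum := Finset.sum_nonneg fun i _ => abs_nonneg _
  set s : ℝ := min ε (-(w ⬝ᵥ u)) with hs
  have hs0 : 0 < s := lt_min hε (by linarith)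
  set D : ℝ := (C + 1) * (Wsum + 1) with hD
  have hD0 : 0 < D := by positivity
  set δ : ℝ := s / (2 * D) with hδ
  have hδ0 : 0 < δ := by positivity
  have hsε : s ≤ ε := min_le_left _ _
  have hsw : s ≤ -(w ⬝ᵥ u) := min_le_right _ _
  have hCD : C ≤ D := by rw [hD]; nlinarith [hC0, hW0]
  have hWCD : Wsum * C ≤ D := by rw [hD]; nlinarith [hC0, hW0]
  have hCle : ∀ i, (∑ j, |(P i j : ℝ)|) ≤ C := by
    intro i
    rw [hC]
    exact Finset.single_le_sum (f := fun i => ∑ j, |(P i j : ℝ)|)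
      (fun i _ => Finset.sum_nonneg fun j _ => abs_nonneg _) (Finset.mem_univ i)
  clear_value δ D s Wsum C
  clear hs hD hC
  have hr : ∀ i : Fin m, ∃ q : ℚ, u i < (q : ℝ) ∧ (q : ℝ) < u i + δ := by
    intro i
    exact exists_rat_btwn (by linarith)
  choose r hr1 hr2 using hr
  have hqcast : ∀ i, ((P *ᵥ r) i : ℝ) = (Pr *ᵥ fun j => ((r j : ℝ))) i := by
    intro i
    simp only [Matrix.mulVec, dotProduct, hPr, Matrix.map_apply]
    push_cast
    rfl
  have hbound : ∀ i, |((P *ᵥ r) i : ℝ) - u i| ≤ C * δ := by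
    intro i
    rw [hqcast i, ← congrFun hPu i]
    have h3 : (Pr *ᵥ fun j => ((r j : ℝ))) i - (Pr *ᵥ u) i
        = ∑ j, (P i j : ℝ) * ((r j : ℝ) - u j) := by
      simp only [Matrix.mulVec, dotProduct, hPr, Matrix.map_apply,
        ← Finset.sum_sub_distrib]
      congr 1; ext j; ring
    rw [h3]
    calc |∑ j, (P i j : ℝ) * ((r j : ℝ) - u j)| ≤ ∑ j, |(P i j : ℝ) * ((r j : ℝ) - u j)| :=
          Finset.abs_sum_le_sum_abs _ _
      _ ≤ ∑ j, |(P i j : ℝ)| * δ := by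
          apply Finset.sum_le_sum
          intro j _
          rw [abs_mul]
          apply mul_le_mul_of_nonneg_left _ (abs_nonneg _)
          rw [abs_le]
          constructor <;> [linarith [hr1 j, hr2 j]; linarith [hr1 j, hr2 j]]
      _ = (∑ j, |(P i j : ℝ)|) * δ := by rw [Finset.sum_mul]
      _ ≤ C * δ := mul_le_mul_of_nonneg_right (hCle i) (le_of_lt hδ0)
  have hCδ : C * δ ≤ s / 2 := by
    rw [hδ, show C * (s / (2 * D)) = C * s / (2 * D) by ring,
      div_le_div_iff₀ (by positivity) (by norm_num : (0:ℝ) < 2)]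
    linarith [mul_le_mul_of_nonneg_left hCD hs0.le]
  have hWCδ : Wsum * (C * δ) ≤ s / 2 := by
    rw [hδ, show Wsum * (C * (s / (2 * D))) = Wsum * C * s / (2 * D) by ring,
      div_le_div_iff₀ (by positivity) (by norm_num : (0:ℝ) < 2)]
    linarith [mul_le_mul_of_nonneg_left hWCD hs0.le]
  refine ⟨P *ᵥ r, ?_, ?_, ?_⟩
  · rw [Matrix.mulVec_mulVec, hAP, Matrix.zero_mulVec]
  · intro i
    have h1 := hbound i
    have h2 := hpos i
    have h4 : (0 : ℝ) ≤ ((P *ᵥ r) i : ℝ) := by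
      rw [abs_le] at h1
      linarith
    exact_mod_cast h4
  · have h1 : |∑ i, w i * (((P *ᵥ r) i : ℝ)) - w ⬝ᵥ u| ≤ Wsum * (C * δ) := by
      have h5 : ∑ i, w i * (((P *ᵥ r) i : ℝ)) - w ⬝ᵥ u
          = ∑ i, w i * (((P *ᵥ r) i : ℝ) - u i) := by
        simp only [dotProduct, ← Finset.sum_sub_distrib]
        congr 1; ext i; ring
      rw [h5]
      calc |∑ i, w i * (((P *ᵥ r) i : ℝ) - u i)|
          ≤ ∑ i, |w i * (((P *ᵥ r) i : ℝ) - u i)| := Finset.abs_sum_le_sum_abs _ _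
        _ ≤ ∑ i, |w i| * (C * δ) := by
            apply Finset.sum_le_sum
            intro i _
            rw [abs_mul]
            exact mul_le_mul_of_nonneg_left (hbound i) (abs_nonneg _)
        _ = Wsum * (C * δ) := by rw [← Finset.sum_mul, ← hW]
    rw [abs_le] at h1
    linarith

lemma exists_nat_kernel_point {n m : ℕ} (V : Matrix (Fin n) (Fin m) ℤ) (w : Fin m → ℝ)
    (q : Fin m → ℚ) (hker : (V.map (Int.cast : ℤ → ℚ)) *ᵥ q = 0) (hq : ∀ i, 0 ≤ q i)
    (hw : ∑ i, w i * (q i : ℝ) < 0) :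
    ∃ a : Fin m → ℕ, (∀ i, ∑ j, V i j * (a j : ℤ) = 0) ∧ ∑ i, w i * (a i : ℝ) < 0 := by
  set N : ℕ := ∏ i, (q i).den with hN
  have hN0 : 0 < N := Finset.prod_pos fun i _ => (q i).pos
  have key : ∀ j, ∃ z : ℤ, 0 ≤ z ∧ (z : ℚ) = q j * N := by
    intro j
    obtain ⟨t, ht⟩ := Finset.dvd_prod_of_mem (fun i => ((q i).den : ℕ)) (Finset.mem_univ j)
    refine ⟨(q j).num * t, ?_, ?_⟩
    · apply mul_nonneg
      · exact Rat.num_nonneg.2 (hq j)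
      · have : (0:ℕ) < (q j).den * t := ht ▸ hN0
        positivity
    · have h6 : q j * ((q j).den : ℚ) = (q j).num := Rat.mul_den_eq_num _
      have hNq : (N : ℚ) = ((q j).den : ℚ) * (t : ℚ) := by
        exact_mod_cast congrArg (Nat.cast : ℕ → ℚ) ht
      push_cast
      rw [hNq, ← h6]
      ring
  choose z hz0 hz using key
  refine ⟨fun j => (z j).toNat, ?_, ?_⟩
  · intro i
    have h1 : ∑ j, (V i j : ℚ) * q j = 0 := by
      have := congrFun hker i
      simpa [Matrix.mulVec, dotProduct] using this
    have h2 : ∑ j, (V i j : ℚ) * (z j : ℚ) = 0 := by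
      calc ∑ j, (V i j : ℚ) * (z j : ℚ) = ∑ j, ((V i j : ℚ) * q j) * (N : ℚ) := by
            apply Finset.sum_congr rfl
            intro j _
            rw [hz j]; ring
        _ = (∑ j, (V i j : ℚ) * q j) * N := by rw [Finset.sum_mul]
        _ = 0 := by rw [h1, zero_mul]
    have h3 : ((∑ j, V i j * z j : ℤ) : ℚ) = 0 := by push_cast; exact h2
    have h4 : ∑ j, V i j * z j = 0 := by exact_mod_cast h3
    calc ∑ j, V i j * ((z j).toNat : ℤ) = ∑ j, V i j * z j := by
          apply Finset.sum_congr rfl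
          intro j _
          rw [Int.toNat_of_nonneg (hz0 j)]
      _ = 0 := h4
  · have hcast : ∀ j, (((z j).toNat : ℕ) : ℝ) = (q j : ℝ) * (N : ℝ) := by
      intro j
      have h5 : ((z j : ℚ) : ℝ) = (((q j) * (N:ℚ) : ℚ) : ℝ) := by rw [hz j]
      push_cast at h5
      rw [show ((((z j).toNat : ℕ) : ℝ)) = (((z j).toNat : ℤ) : ℝ) by push_cast; ring,
        Int.toNat_of_nonneg (hz0 j)]
      exact h5
    calc ∑ i, w i * (((z i).toNat : ℕ) : ℝ) = ∑ i, (w i * (q i : ℝ)) * (N : ℝ) := by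
          apply Finset.sum_congr rfl
          intro i _
          rw [hcast i]; ring
      _ = (∑ i, w i * (q i : ℝ)) * N := by rw [Finset.sum_mul]
      _ < 0 := mul_neg_of_neg_of_pos hw (by exact_mod_cast hN0)

/-- A binomial `x^a - 1` with `a` an integer kernel vector lies in the toric ideal. -/
lemma monomial_sub_one_mem {K : Type*} [Field K] {n m : ℕ} (V : Matrix (Fin n) (Fin m) ℤ)
    (a : Fin m → ℕ) (hker : ∀ i, ∑ j, V i j * (a j : ℤ) = 0) :
    MvPolynomial.monomial (Finsupp.equivFunOnFinite.symm a) (1 : K)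
      - MvPolynomial.monomial 0 (1 : K) ∈ toricIdeal K V := by
  rw [toricIdeal, RingHom.mem_ker, map_sub]
  set s : Fin m →₀ ℕ := Finsupp.equivFunOnFinite.symm a with hs
  have h1 : ∀ (d : Fin m →₀ ℕ), (MvPolynomial.aeval
      (fun j => AddMonoidAlgebra.of' K (Fin n → ℤ) (fun i => V i j)))
      (MvPolynomial.monomial d (1 : K))
      = AddMonoidAlgebra.single (∑ j ∈ d.support, d j • (fun i => V i j)) 1 := by
    intro d
    rw [MvPolynomial.aeval_monomial, _root_.map_one, one_mul]
    rw [Finsupp.prod]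
    have h2 : ∀ j ∈ d.support, (AddMonoidAlgebra.of' K (Fin n → ℤ) (fun i => V i j)) ^ (d j)
        = AddMonoidAlgebra.single ((d j) • (fun i => V i j)) 1 := by
      intro j _
      rw [AddMonoidAlgebra.of'_apply, AddMonoidAlgebra.single_pow, one_pow]
    rw [Finset.prod_congr rfl h2, AddMonoidAlgebra.prod_single, Finset.prod_const_one]
  rw [h1, h1]
  have h3 : (∑ j ∈ s.support, s j • (fun i => V i j) : Fin n → ℤ) = 0 := by
    rw [Finset.sum_subset (Finset.subset_univ s.support)]
    · funext i
      rw [Finset.sum_apply]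
      have h4 : ∀ j ∈ Finset.univ, (s j • fun i => V i j) i = V i j * (a j : ℤ) := by
        intro j _
        simp [hs, Finsupp.coe_equivFunOnFinite_symm, mul_comm]
      rw [Finset.sum_congr rfl h4]
      exact hker i
    · intro j _ hj
      rw [Finsupp.notMem_support_iff.1 hj, zero_smul]
  have h5 : (∑ j ∈ (0 : Fin m →₀ ℕ).support, (0 : Fin m →₀ ℕ) j • (fun i => V i j) : Fin n → ℤ)
      = 0 := by simp
  rw [h3, h5, sub_self]

/-- The toric ideal contains no nonzero constants, so `1 ∉ in_≼(I_V)`. -/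
lemma not_one_mem_initialIdealOrd {K : Type*} [Field K] {n m : ℕ}
    (V : Matrix (Fin n) (Fin m) ℤ) (t : TermOrder m) :
    (1 : MvPolynomial (Fin m) K) ∉ initialIdealOrd t (toricIdeal K V) := by
  intro hmem
  by_cases h0 : ∃ f ∈ toricIdeal K V, f ≠ 0 ∧ ∀ b ∈ f.support, t.le b 0
  · obtain ⟨f, hfI, hf0, hle⟩ := h0
    have hsupp : ∀ b ∈ f.support, b = 0 := fun b hb => t.antisymm b 0 (hle b hb) (t.zero_le b)
    have hfC : f = MvPolynomial.monomial 0 (MvPolynomial.coeff 0 f) := by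
      apply MvPolynomial.ext
      intro b
      rw [MvPolynomial.coeff_monomial]
      by_cases hb : b = 0
      · subst hb; simp
      · rw [if_neg (fun h => hb h.symm)]
        by_contra hc
        exact hb (hsupp b (MvPolynomial.mem_support_iff.2 hc))
    have hc0 : MvPolynomial.coeff 0 f ≠ 0 := by
      intro h
      rw [hfC, h, map_zero] at hf0
      exact hf0 rfl
    have : (MvPolynomial.aeval
        (fun j => AddMonoidAlgebra.of' K (Fin n → ℤ) (fun i => V i j))) f = 0 :=
      RingHom.mem_ker.1 hfI
    rw [hfC] at this
    rw [MvPolynomial.aeval_monomial] at this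
    simp only [Finsupp.prod_zero_index, mul_one] at this
    have : (MvPolynomial.coeff 0 f) • (1 : AddMonoidAlgebra K (Fin n → ℤ)) = 0 := by
      rw [Algebra.algebraMap_eq_smul_one] at this
      exact this
    rw [smul_eq_zero] at this
    rcases this with h | h
    · exact hc0 h
    · exact one_ne_zero h
  · have hle : initialIdealOrd t (toricIdeal K V)
        ≤ RingHom.ker (MvPolynomial.constantCoeff : MvPolynomial (Fin m) K →+* K) := by
      rw [initialIdealOrd, Ideal.span_le]
      rintro g ⟨f, hfI, hf0, a, ha, hbnd, rfl⟩
      have ha0 : a ≠ 0 := by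
        intro h
        exact h0 ⟨f, hfI, hf0, fun b hb => h ▸ hbnd b hb⟩
      rw [SetLike.mem_coe, RingHom.mem_ker, MvPolynomial.constantCoeff_eq]
      rw [MvPolynomial.coeff_monomial, if_neg ha0]
    have := hle hmem
    rw [RingHom.mem_ker, _root_.map_one] at this
    exact one_ne_zero this

/-- Let `w ∈ ℝᵐ` be generic for `I_V`. If `in_w(I_V)` is an initial
ideal of `I_V` (i.e. equals `in_≼(I_V)` for some term order `≼`), then `w ∈ W`. -/

theorem mem_coneW_of_initialIdeal
    (K : Type*) [Field K] [CharZero K]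
    (n m : ℕ) (hnm : n < m) (V : Matrix (Fin n) (Fin m) ℤ)
    (hrank : V.rank = n)
    (hcomplete : ∀ b : Fin n → ℝ, ∃ u : Fin m → ℝ,
      (∀ i, 0 ≤ u i) ∧ (V.map (Int.cast : ℤ → ℝ)) *ᵥ u = b)
    (w : Fin m → ℝ)
    (hgeneric : IsMonomialIdeal (initialIdealW w (toricIdeal K V)))
    (hinitial : ∃ t : TermOrder m,
      initialIdealW w (toricIdeal K V) = initialIdealOrd t (toricIdeal K V)) :
    w ∈ coneW V := by
  classical
  by_contra hcW
  rw [coneW, Set.mem_setOf_eq] at hcW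
  push_neg at hcW
  obtain ⟨u, huU, hu0⟩ := hcW 0
  obtain ⟨huker, hupos⟩ := huU
  -- a strictly positive real kernel vector `p`
  obtain ⟨p0, hp0nn, hp0eq⟩ := hcomplete (-(V.map (Int.cast : ℤ → ℝ) *ᵥ (fun _ => 1)))
  set p : Fin m → ℝ := fun i => p0 i + 1 with hp
  have hpker : V.map (Int.cast : ℤ → ℝ) *ᵥ p = 0 := by
    have hpp : p = p0 + (fun _ => 1) := rfl
    rw [hpp, Matrix.mulVec_add, hp0eq]
    funext i
    simp
  have hp1 : ∀ i, 1 ≤ p i := by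
    intro i
    have := hp0nn i
    simp only [hp]
    linarith
  -- perturb u to be strictly positive
  set ε : ℝ := (-(w ⬝ᵥ u)) / (2 * (|w ⬝ᵥ p| + 1)) with hε
  have hε0 : 0 < ε := div_pos (by linarith) (by positivity)
  set u₁ : Fin m → ℝ := u + ε • p with hu₁
  have h1ker : V.map (Int.cast : ℤ → ℝ) *ᵥ u₁ = 0 := by
    rw [hu₁, Matrix.mulVec_add, huker, Matrix.mulVec_smul, hpker, smul_zero, add_zero]
  have h1pos : ∀ i, ε ≤ u₁ i := by
    intro i
    have h2 := hp1 i
    have h3 := hupos i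
    simp only [hu₁, Pi.add_apply, Pi.smul_apply, smul_eq_mul]
    nlinarith
  have h1neg : w ⬝ᵥ u₁ < 0 := by
    rw [hu₁, dotProduct_add, dotProduct_smul]
    have h2 : ε * (|w ⬝ᵥ p| + 1) = (-(w ⬝ᵥ u)) / 2 := by
      rw [hε]
      field_simp
    have h3 : w ⬝ᵥ p ≤ |w ⬝ᵥ p| := le_abs_self _
    have h4 : ε • (w ⬝ᵥ p) = ε * (w ⬝ᵥ p) := by rw [smul_eq_mul]
    rw [h4]
    nlinarith [mul_le_mul_of_nonneg_left h3 hε0.le]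
  -- rational, then natural, kernel point of negative weight
  obtain ⟨q, hqker, hq0, hqneg⟩ := exists_rat_kernel_point V w u₁ h1ker ε hε0 h1pos h1neg
  obtain ⟨a, haker, haneg⟩ := exists_nat_kernel_point V w q hqker hq0 hqneg
  -- the binomial x^a - 1
  set s : Fin m →₀ ℕ := Finsupp.equivFunOnFinite.symm a with hsdef
  have hsa : ∀ j, s j = a j := fun j => congrFun (Finsupp.coe_equivFunOnFinite_symm a) j
  have hwdeg0 : wdeg w (0 : Fin m →₀ ℕ) = 0 := by simp [wdeg]
  have hwnegs : wdeg w s < 0 := by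
    rw [wdeg]
    have h5 : ∀ i ∈ Finset.univ, w i * ((s i : ℕ) : ℝ) = w i * (a i : ℝ) := by
      intro i _
      rw [hsa i]
    rw [Finset.sum_congr rfl h5]
    exact haneg
  have hs0 : s ≠ 0 := by
    intro h
    rw [h, hwdeg0] at hwnegs
    exact lt_irrefl 0 hwnegs
  set f : MvPolynomial (Fin m) K :=
    MvPolynomial.monomial s (1 : K) - MvPolynomial.monomial 0 (1 : K) with hf
  have hfI : f ∈ toricIdeal K V := monomial_sub_one_mem V a haker
  have hcs : MvPolynomial.coeff s f = 1 := by
    rw [hf, MvPolynomial.coeff_sub, MvPolynomial.coeff_monomial, MvPolynomial.coeff_monomial,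
      if_pos rfl, if_neg (fun h => hs0 h.symm), sub_zero]
  have hc0 : MvPolynomial.coeff 0 f = -1 := by
    rw [hf, MvPolynomial.coeff_sub, MvPolynomial.coeff_monomial, MvPolynomial.coeff_monomial,
      if_pos rfl, if_neg hs0, zero_sub]
  have hsupp : f.support = {s, 0} := by
    apply Finset.Subset.antisymm
    · intro b hb
      have h6 := MvPolynomial.support_sub (Fin m)
        (MvPolynomial.monomial s (1 : K)) (MvPolynomial.monomial 0 (1 : K)) hb
      simp only [Finset.mem_insert, Finset.mem_singleton]
      rcases Finset.mem_union.1 h6 with h7 | h7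
      · left
        rw [MvPolynomial.support_monomial, if_neg (one_ne_zero (α := K))] at h7
        exact Finset.mem_singleton.1 h7
      · right
        rw [MvPolynomial.support_monomial, if_neg (one_ne_zero (α := K))] at h7
        exact Finset.mem_singleton.1 h7
    · intro b hb
      simp only [Finset.mem_insert, Finset.mem_singleton] at hb
      rcases hb with rfl | rfl
      · rw [MvPolynomial.mem_support_iff, hcs]; exact one_ne_zero
      · rw [MvPolynomial.mem_support_iff, hc0]; exact neg_ne_zero.2 one_ne_zero
  have hfilter : f.support.filter (fun c => ∀ b ∈ f.support, wdeg w b ≤ wdeg w c) = {0} := by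
    apply Finset.ext
    intro b
    simp only [Finset.mem_filter, hsupp, Finset.mem_insert, Finset.mem_singleton]
    constructor
    · rintro ⟨rfl | rfl, hall⟩
      · exfalso
        have h7 := hall 0 (Or.inr rfl)
        rw [hwdeg0] at h7
        linarith
      · rfl
    · rintro rfl
      refine ⟨Or.inr rfl, ?_⟩
      intro b hb
      rcases hb with rfl | rfl
      · rw [hwdeg0]; exact le_of_lt hwnegs
      · exact le_refl _
  have hinitf : initialForm w f = MvPolynomial.monomial 0 (-1 : K) := by
    rw [initialForm, hfilter, Finset.sum_singleton, hc0]
  have hmem1 : (MvPolynomial.monomial 0 (-1 : K) : MvPolynomial (Fin m) K)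
      ∈ initialIdealW w (toricIdeal K V) :=
    Ideal.subset_span ⟨f, hfI, hinitf.symm⟩
  obtain ⟨t, ht⟩ := hinitial
  have hone : (1 : MvPolynomial (Fin m) K) ∈ initialIdealOrd t (toricIdeal K V) := by
    rw [← ht]
    have h8 := neg_mem hmem1
    have h9 : -(MvPolynomial.monomial 0 (-1 : K) : MvPolynomial (Fin m) K) = 1 := by
      simp [MvPolynomial.monomial_zero']
    rwa [h9] at h8
  exact not_one_mem_initialIdealOrd V t hone
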